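/- In the SO(3) theory at q = e^{2πi/r} with r ≥ 5 odd, the matrix with entries μ_r·H(m,n) for m, n ∈ I_r = {0, 2, 4, …, r−3}, where μ_r = 2 sin(2π/r)/√r and H(m,n) = (−1)^{m+n}(q^{(m+1)(n+1)} − q^{−(m+1)(n+1)})/(q − q^{−1}), is a symmetric unitary matrix. -/

import Mathlib

open Real

/-- The kernel `H(m,n) = (-1)^{m+n} (q^{(m+1)(n+1)} - q^{-(m+1)(n+1)})/(q - q^{-1})` at
`q = e^{2πi/r}`. -/
noncomputable def Hker (r m n : ℕ) : ℂ :=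
  (-1 : ℂ) ^ (m + n) *
    ((Complex.exp (2 * (π : ℂ) * Complex.I / r)) ^ (((m : ℤ) + 1) * ((n : ℤ) + 1)) -
      (Complex.exp (2 * (π : ℂ) * Complex.I / r)) ^ (-(((m : ℤ) + 1) * ((n : ℤ) + 1)))) /
    (Complex.exp (2 * (π : ℂ) * Complex.I / r) - (Complex.exp (2 * (π : ℂ) * Complex.I / r))⁻¹)

noncomputable def qe (r : ℕ) : ℂ := Complex.exp (2 * (π : ℂ) * Complex.I / r)

lemma Hker_eq (r m n : ℕ) :
    Hker r m n = (-1 : ℂ) ^ (m + n) *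
      (qe r ^ (((m : ℤ) + 1) * ((n : ℤ) + 1)) - qe r ^ (-(((m : ℤ) + 1) * ((n : ℤ) + 1)))) /
      (qe r - (qe r)⁻¹) := rfl

lemma qe_ne_zero (r : ℕ) : qe r ≠ 0 := Complex.exp_ne_zero _

lemma qe_zpow (r : ℕ) (c : ℤ) : qe r ^ c = Complex.exp (c * (2 * π * Complex.I / r)) := by
  rw [qe, ← Complex.exp_int_mul]

lemma qe_pow_one (r : ℕ) (hr : 0 < r) {c : ℤ} (h : (r:ℤ) ∣ c) : qe r ^ c = 1 := by
  obtain ⟨d, rfl⟩ := h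
  rw [qe_zpow]
  have hrne : (r:ℂ) ≠ 0 := Nat.cast_ne_zero.mpr hr.ne'
  have h1 : (((r:ℤ) * d : ℤ) : ℂ) * (2 * π * Complex.I / r) = d * (2 * π * Complex.I) := by
    push_cast; field_simp
  rw [h1, Complex.exp_int_mul, Complex.exp_two_pi_mul_I, one_zpow]

lemma qe_pow_ne_one (r : ℕ) (hr : 0 < r) {c : ℤ} (h : ¬ (r:ℤ) ∣ c) : qe r ^ c ≠ 1 := by
  rw [qe_zpow]
  intro hone
  rw [Complex.exp_eq_one_iff] at hone
  obtain ⟨n, hn⟩ := hone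
  apply h ⟨n, ?_⟩
  have hrne : (r:ℂ) ≠ 0 := Nat.cast_ne_zero.mpr hr.ne'
  have h2 : (2 * (π:ℂ) * Complex.I) ≠ 0 := by
    simp [Real.pi_ne_zero, Complex.I_ne_zero, Complex.ofReal_ne_zero]
  have key : (c : ℂ) = n * r := by
    have hn' : (c:ℂ) * (2 * π * Complex.I) = (n * r) * (2 * π * Complex.I) := by
      field_simp at hn
      linear_combination (2 * (π:ℂ) * Complex.I) * hn
    exact mul_right_cancel₀ h2 hn'
  have : c = n * r := by exact_mod_cast key
  rw [this, Int.mul_comm]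

lemma qe_sub_inv (r : ℕ) : qe r - (qe r)⁻¹ = 2 * (Real.sin (2 * π / r) : ℂ) * Complex.I := by
  have hθ : 2 * (π:ℂ) * Complex.I / r = ((2 * π / r : ℝ) : ℂ) * Complex.I := by
    push_cast; ring
  rw [qe, hθ, ← Complex.exp_neg, ← neg_mul, Complex.exp_mul_I, Complex.exp_mul_I]
  rw [Complex.cos_neg, Complex.sin_neg, ← Complex.ofReal_sin]
  ring

lemma sin_pos_aux (r : ℕ) (hr5 : 5 ≤ r) : 0 < Real.sin (2 * π / r) := by
  apply Real.sin_pos_of_pos_of_lt_pi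
  · positivity
  · rw [div_lt_iff₀ (by positivity)]
    have h5 : (5:ℝ) ≤ r := by exact_mod_cast hr5
    nlinarith [Real.pi_pos, mul_le_mul_of_nonneg_left h5 Real.pi_pos.le]

lemma qe_sub_inv_ne_zero (r : ℕ) (hr5 : 5 ≤ r) : qe r - (qe r)⁻¹ ≠ 0 := by
  rw [qe_sub_inv]
  exact mul_ne_zero (mul_ne_zero two_ne_zero
    (Complex.ofReal_ne_zero.mpr (sin_pos_aux r hr5).ne')) Complex.I_ne_zero

lemma mu_sq (r : ℕ) (hr5 : 5 ≤ r) :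
    ((2 * Real.sin (2 * π / r) / Real.sqrt r : ℝ) : ℂ) ^ 2 = -((qe r - (qe r)⁻¹)^2) / r := by
  rw [qe_sub_inv]
  have hr0 : (0:ℝ) < r := by positivity
  have hsq : (Real.sqrt r)^2 = (r:ℝ) := Real.sq_sqrt hr0.le
  have hrne : (r:ℂ) ≠ 0 := by exact_mod_cast hr0.ne'
  have h1 : (2 * Real.sin (2 * π / r) / Real.sqrt r)^2 = 4 * (Real.sin (2 * π / r))^2 / r := by
    rw [div_pow, hsq]; ring
  calc ((2 * Real.sin (2 * π / r) / Real.sqrt r : ℝ) : ℂ) ^ 2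
      = (((2 * Real.sin (2 * π / r) / Real.sqrt r)^2 : ℝ) : ℂ) := by push_cast; ring
    _ = ((4 * (Real.sin (2 * π / r))^2 / r : ℝ) : ℂ) := by rw [h1]
    _ = -((2 * (Real.sin (2 * π / r) : ℂ) * Complex.I)^2) / r := by
        rw [show -((2 * (Real.sin (2 * π / r) : ℂ) * Complex.I)^2)
            = 4 * (Real.sin (2 * π / r) : ℂ)^2 by
          linear_combination (-(4 * (Real.sin (2 * π / r) : ℂ)^2)) * Complex.I_sq]
        rw [Complex.ofReal_div, Complex.ofReal_mul, Complex.ofReal_pow]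
        norm_num

lemma qe_conj (r : ℕ) : (starRingEnd ℂ) (qe r) = (qe r)⁻¹ := by
  rw [qe, ← Complex.exp_conj, ← Complex.exp_neg]
  congr 1
  simp [map_div₀, Complex.conj_I, map_ofNat]
  ring

lemma qe_conj_zpow (r : ℕ) (c : ℤ) : (starRingEnd ℂ) (qe r ^ c) = qe r ^ (-c) := by
  rw [map_zpow₀, qe_conj, inv_zpow, ← zpow_neg]

lemma Hker_conj (r m n : ℕ) : (starRingEnd ℂ) (Hker r m n) = Hker r m n := by
  rw [Hker_eq, map_div₀, map_mul, map_pow, map_neg, map_one, map_sub, map_sub,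
    qe_conj_zpow, qe_conj_zpow, neg_neg, map_inv₀, qe_conj, inv_inv]
  rw [show (qe r)⁻¹ - qe r = -(qe r - (qe r)⁻¹) by ring,
    show (-1:ℂ)^(m+n) * (qe r ^ (-(((m:ℤ)+1)*((n:ℤ)+1))) - qe r ^ (((m:ℤ)+1)*((n:ℤ)+1)))
      = -((-1:ℂ)^(m+n) * (qe r ^ (((m:ℤ)+1)*((n:ℤ)+1)) - qe r ^ (-(((m:ℤ)+1)*((n:ℤ)+1))))) by ring,
    neg_div_neg_eq]

noncomputable def Tsum (r : ℕ) (c : ℤ) : ℂ :=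
  ∑ t ∈ Finset.range ((r-1)/2), qe r ^ (c * (2*(t:ℤ)+1))

lemma dvd_of_dvd_two_mul (r : ℕ) (hodd : Odd r) {c : ℤ} (h : (r:ℤ) ∣ 2 * c) : (r:ℤ) ∣ c := by
  have h2 : Nat.Coprime r 2 := Nat.coprime_two_right.mpr hodd
  have hcop : IsCoprime (r:ℤ) (2:ℤ) := by
    rw [Int.isCoprime_iff_gcd_eq_one]
    show Int.gcd (r:ℤ) ((2:ℕ):ℤ) = 1
    rw [Int.gcd_natCast_natCast]
    exact h2
  exact hcop.dvd_of_dvd_mul_left h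

lemma Tsum_dvd (r : ℕ) (hr : 0 < r) {c : ℤ} (h : (r:ℤ) ∣ c) :
    Tsum r c = (((r-1)/2 : ℕ) : ℂ) := by
  rw [Tsum, Finset.sum_congr rfl (fun t _ => qe_pow_one r hr (h.mul_right _))]
  simp

lemma Tsum_not_dvd (r : ℕ) (hodd : Odd r) (hr5 : 5 ≤ r) {c : ℤ} (h : ¬ (r:ℤ) ∣ c) :
    Tsum r c = -1 / (qe r ^ c + 1) := by
  have hr : 0 < r := by omega
  have hq := qe_ne_zero r
  have h2 : ¬ (r:ℤ) ∣ 2 * c := fun hd => h (dvd_of_dvd_two_mul r hodd hd)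
  have hw : qe r ^ (2*c) ≠ 1 := qe_pow_ne_one r hr h2
  have hx2 : (qe r ^ c)^2 ≠ 1 := by
    rw [← zpow_natCast (qe r ^ c) 2, ← zpow_mul]
    rwa [show c * ((2:ℕ):ℤ) = 2 * c by push_cast; ring]
  have hx1 : qe r ^ c - 1 ≠ 0 := by
    intro hc; apply hx2; rw [sub_eq_zero] at hc; rw [hc]; norm_num
  have hxm1 : qe r ^ c + 1 ≠ 0 := by
    intro hc; apply hx2
    have : qe r ^ c = -1 := by linear_combination hc
    rw [this]; norm_num
  have hterm : ∀ t ∈ Finset.range ((r-1)/2),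
      qe r ^ (c * (2*(t:ℤ)+1)) = (qe r ^ (2*c))^t * qe r ^ c := by
    intro t _
    rw [← zpow_natCast (qe r ^ (2*c)) t, ← zpow_mul, ← zpow_add₀ hq]
    congr 1; ring
  rw [Tsum, Finset.sum_congr rfl hterm, ← Finset.sum_mul, geom_sum_eq hw]
  have hN : (qe r ^ (2*c)) ^ ((r-1)/2 : ℕ) = qe r ^ (-c) := by
    rw [← zpow_natCast (qe r ^ (2*c)) _, ← zpow_mul]
    obtain ⟨j, hj⟩ := hodd
    have h2N : (2:ℤ) * (((r-1)/2 : ℕ):ℤ) = (r:ℤ) - 1 := by omega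
    rw [show 2*c*(((r-1)/2 : ℕ):ℤ) = c * (2 * (((r-1)/2 : ℕ):ℤ)) by ring, h2N]
    rw [show c * ((r:ℤ) - 1) = c * r + (-c) by ring, zpow_add₀ hq]
    rw [qe_pow_one r hr (Dvd.intro_left c rfl), one_mul]
  rw [hN]
  have hsq : qe r ^ (2*c) = (qe r ^ c)^2 := by
    rw [← zpow_natCast (qe r ^ c) 2, ← zpow_mul]; congr 1; push_cast; ring
  have hneg : qe r ^ (-c) = (qe r ^ c)⁻¹ := by rw [zpow_neg]
  rw [hsq, hneg]
  have hx0 : qe r ^ c ≠ 0 := zpow_ne_zero _ hq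
  have hfac : (qe r ^ c)^2 - 1 = (qe r ^ c - 1) * (qe r ^ c + 1) := by ring
  rw [hfac]
  field_simp
  ring

lemma Tsum_add_neg (r : ℕ) (hodd : Odd r) (hr5 : 5 ≤ r) {c : ℤ} (h : ¬ (r:ℤ) ∣ c) :
    Tsum r c + Tsum r (-c) = -1 := by
  have hnc : ¬ (r:ℤ) ∣ -c := fun hd => h ((dvd_neg).mp hd)
  rw [Tsum_not_dvd r hodd hr5 h, Tsum_not_dvd r hodd hr5 hnc]
  have hq := qe_ne_zero r
  have hx0 : qe r ^ c ≠ 0 := zpow_ne_zero _ hq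
  have h2 : ¬ (r:ℤ) ∣ 2 * c := fun hd => h (dvd_of_dvd_two_mul r hodd hd)
  have hx2 : (qe r ^ c)^2 ≠ 1 := by
    have hw : qe r ^ (2*c) ≠ 1 := qe_pow_ne_one r (by omega) h2
    rwa [show qe r ^ (2*c) = (qe r ^ c)^2 by
      rw [← zpow_natCast (qe r ^ c) 2, ← zpow_mul]; congr 1; push_cast; ring] at hw
  have hxm1 : qe r ^ c + 1 ≠ 0 := by
    intro hc; apply hx2
    have : qe r ^ c = -1 := by linear_combination hc
    rw [this]; norm_num
  rw [zpow_neg]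
  have h1x : (1:ℂ) + qe r ^ c ≠ 0 := by rw [add_comm]; exact hxm1
  have hinv1 : (qe r ^ c)⁻¹ + 1 ≠ 0 := by
    intro hc
    apply hxm1
    have : (qe r ^ c)⁻¹ = -1 := by linear_combination hc
    have h1 : qe r ^ c * ((qe r ^ c)⁻¹ + 1) = 1 + qe r ^ c := by
      field_simp
    rw [hc, mul_zero] at h1
    linear_combination -h1
  field_simp [h1x]
  ring

lemma summand_eq (r : ℕ) (hr5 : 5 ≤ r) (m n k : ℕ) (hm : Even m) (hn : Even n) (hk : Even k) :
    ((2 * Real.sin (2 * π / r) / Real.sqrt r : ℝ) : ℂ) ^ 2 * Hker r m k *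
        (starRingEnd ℂ) (Hker r n k)
      = -(1/(r:ℂ)) * (qe r ^ (((((m:ℤ)+1)+((n:ℤ)+1))) * ((k:ℤ)+1))
          + qe r ^ ((-(((m:ℤ)+1)+((n:ℤ)+1))) * ((k:ℤ)+1))
          - qe r ^ (((((m:ℤ)+1)-((n:ℤ)+1))) * ((k:ℤ)+1))
          - qe r ^ (((((n:ℤ)+1)-((m:ℤ)+1))) * ((k:ℤ)+1))) := by
  have hq := qe_ne_zero r
  have hs := qe_sub_inv_ne_zero r hr5
  have hrne : (r:ℂ) ≠ 0 := by
    have : (0:ℝ) < r := by positivity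
    exact_mod_cast this.ne'
  rw [Hker_conj, Hker_eq, Hker_eq, (hm.add hk).neg_one_pow, (hn.add hk).neg_one_pow,
    one_mul, one_mul, mu_sq r hr5]
  set s : ℂ := qe r - (qe r)⁻¹ with hsdef
  rw [show ((((m:ℤ)+1)+((n:ℤ)+1))) * ((k:ℤ)+1)
      = ((m:ℤ)+1)*((k:ℤ)+1) + ((n:ℤ)+1)*((k:ℤ)+1) by ring,
    show ((-(((m:ℤ)+1)+((n:ℤ)+1))) * ((k:ℤ)+1))
      = (-(((m:ℤ)+1)*((k:ℤ)+1))) + (-(((n:ℤ)+1)*((k:ℤ)+1))) by ring,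
    show (((((m:ℤ)+1)-((n:ℤ)+1))) * ((k:ℤ)+1))
      = ((m:ℤ)+1)*((k:ℤ)+1) + (-(((n:ℤ)+1)*((k:ℤ)+1))) by ring,
    show (((((n:ℤ)+1)-((m:ℤ)+1))) * ((k:ℤ)+1))
      = (-(((m:ℤ)+1)*((k:ℤ)+1))) + ((n:ℤ)+1)*((k:ℤ)+1) by ring,
    zpow_add₀ hq, zpow_add₀ hq, zpow_add₀ hq, zpow_add₀ hq]
  field_simp [hs]
  ring

lemma sum_even_reindex' (r : ℕ) (hodd : Odd r) (hr5 : 5 ≤ r) (f : ℕ → ℂ) :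
    ∑ k ∈ (Finset.range (r - 2)).filter (fun a => Even a), f k
      = ∑ t ∈ Finset.range ((r-1)/2), f (2*t) := by
  obtain ⟨j, hj⟩ := hodd
  refine Finset.sum_nbij' (fun k => k / 2) (fun t => 2 * t) ?_ ?_ ?_ ?_ ?_
  · intro a ha
    simp only [Finset.mem_filter, Finset.mem_range, Nat.even_iff] at ha ⊢
    omega
  · intro t ht
    simp only [Finset.mem_filter, Finset.mem_range, Nat.even_iff] at ht ⊢
    omega
  · intro a ha
    simp only [Finset.mem_filter, Finset.mem_range, Nat.even_iff] at ha
    show 2 * (a / 2) = a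
    omega
  · intro t ht
    show 2 * t / 2 = t
    omega
  · intro a ha
    simp only [Finset.mem_filter, Finset.mem_range, Nat.even_iff] at ha
    show f a = f (2 * (a / 2))
    have h2 : 2 * (a / 2) = a := by omega
    rw [h2]

/-- In the `SO(3)` theory at `q = e^{2πi/r}`, the matrix `(μ_r H(m,n))_{m,n ∈ I_r}`,
`I_r = {0,2,…,r-3}`, `μ_r = 2 sin(2π/r)/√r`, is symmetric and unitary. -/
theorem Hker_symmetric_unitary (r : ℕ) (hr : Odd r) (hr5 : 5 ≤ r) :
    (∀ m n : ℕ, Hker r m n = Hker r n m) ∧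
    (∀ m ∈ (Finset.range (r - 2)).filter (fun a => Even a),
      ∀ n ∈ (Finset.range (r - 2)).filter (fun a => Even a),
        ∑ k ∈ (Finset.range (r - 2)).filter (fun a => Even a),
          ((2 * Real.sin (2 * π / r) / Real.sqrt r : ℝ) : ℂ) ^ 2 *
            Hker r m k * (starRingEnd ℂ) (Hker r n k) = if m = n then 1 else 0) := by
  constructor
  · intro m n
    rw [Hker, Hker, add_comm m n, mul_comm ((m:ℤ)+1) ((n:ℤ)+1)]
  · intro m hm n hn
    simp only [Finset.mem_filter, Finset.mem_range] at hm hn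
    obtain ⟨hmlt, hme⟩ := hm
    obtain ⟨hnlt, hne⟩ := hn
    have hm2 : 2 ∣ m := hme.two_dvd
    have hn2 : 2 ∣ n := hne.two_dvd
    have hstep : ∀ k ∈ (Finset.range (r - 2)).filter (fun a => Even a),
        ((2 * Real.sin (2 * π / r) / Real.sqrt r : ℝ) : ℂ) ^ 2 * Hker r m k *
          (starRingEnd ℂ) (Hker r n k)
        = -(1/(r:ℂ)) * (qe r ^ (((((m:ℤ)+1)+((n:ℤ)+1))) * ((k:ℤ)+1))
            + qe r ^ ((-(((m:ℤ)+1)+((n:ℤ)+1))) * ((k:ℤ)+1))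
            - qe r ^ (((((m:ℤ)+1)-((n:ℤ)+1))) * ((k:ℤ)+1))
            - qe r ^ (((((n:ℤ)+1)-((m:ℤ)+1))) * ((k:ℤ)+1))) := by
      intro k hk
      simp only [Finset.mem_filter, Finset.mem_range] at hk
      exact summand_eq r hr5 m n k hme hne hk.2
    rw [Finset.sum_congr rfl hstep, sum_even_reindex' r hr hr5]
    have hcast : ∀ t : ℕ, ((2*t : ℕ) : ℤ) + 1 = 2*(t:ℤ)+1 := by intro t; push_cast; ring
    have hsum : ∑ t ∈ Finset.range ((r-1)/2),
        (-(1/(r:ℂ)) * (qe r ^ (((((m:ℤ)+1)+((n:ℤ)+1))) * (((2*t : ℕ):ℤ)+1))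
            + qe r ^ ((-(((m:ℤ)+1)+((n:ℤ)+1))) * (((2*t : ℕ):ℤ)+1))
            - qe r ^ (((((m:ℤ)+1)-((n:ℤ)+1))) * (((2*t : ℕ):ℤ)+1))
            - qe r ^ (((((n:ℤ)+1)-((m:ℤ)+1))) * (((2*t : ℕ):ℤ)+1))))
        = -(1/(r:ℂ)) * (Tsum r (((m:ℤ)+1)+((n:ℤ)+1)) + Tsum r (-(((m:ℤ)+1)+((n:ℤ)+1)))
            - Tsum r (((m:ℤ)+1)-((n:ℤ)+1)) - Tsum r (((n:ℤ)+1)-((m:ℤ)+1))) := by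
      simp only [Tsum]
      rw [← Finset.sum_add_distrib, ← Finset.sum_sub_distrib, ← Finset.sum_sub_distrib,
        Finset.mul_sum]
      apply Finset.sum_congr rfl
      intro t _
      rw [hcast t]
    rw [hsum]
    obtain ⟨j, hj⟩ := hr
    have hndvd_sum : ¬ (r:ℤ) ∣ (((m:ℤ)+1)+((n:ℤ)+1)) := by
      intro hd
      have h1 : (r:ℤ) ≤ ((m:ℤ)+1)+((n:ℤ)+1) := Int.le_of_dvd (by omega) hd
      have hd2 : (r:ℤ) ∣ (((m:ℤ)+1)+((n:ℤ)+1)) - r := hd.sub ⟨1, by ring⟩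
      by_cases hc : (((m:ℤ)+1)+((n:ℤ)+1)) - r = 0
      · omega
      · have h2 : (r:ℤ) ≤ (((m:ℤ)+1)+((n:ℤ)+1)) - r := Int.le_of_dvd (by omega) hd2
        omega
    rw [Tsum_add_neg r ⟨j, hj⟩ hr5 hndvd_sum]
    by_cases hmn : m = n
    · subst hmn
      simp only [if_pos rfl]
      rw [show ((m:ℤ)+1)-((m:ℤ)+1) = 0 by ring, Tsum_dvd r (by omega) (dvd_zero _)]
      have hz : ((r-1)/2) * 2 + 1 = r := by omega
      have hN : (((r-1)/2 : ℕ):ℂ) * 2 + 1 = (r:ℂ) := by exact_mod_cast hz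
      have hrne : (r:ℂ) ≠ 0 := by
        have : (0:ℝ) < r := by positivity
        exact_mod_cast this.ne'
      field_simp
      simp
      linear_combination hN
    · simp only [if_neg hmn]
      have hndvd_diff : ¬ (r:ℤ) ∣ (((m:ℤ)+1)-((n:ℤ)+1)) := by
        intro hd
        by_cases hpos : 0 < ((m:ℤ)+1)-((n:ℤ)+1)
        · have := Int.le_of_dvd hpos hd
          omega
        · have hmn' : (m:ℤ) ≠ (n:ℤ) := by exact_mod_cast fun h => hmn (Nat.cast_injective h)
          have := Int.le_of_dvd (by omega : (0:ℤ) < -((((m:ℤ)+1)-((n:ℤ)+1)))) (dvd_neg.mpr hd)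
          omega
      have : Tsum r (((m:ℤ)+1)-((n:ℤ)+1)) + Tsum r (((n:ℤ)+1)-((m:ℤ)+1)) = -1 := by
        rw [show ((n:ℤ)+1)-((m:ℤ)+1) = -(((m:ℤ)+1)-((n:ℤ)+1)) by ring]
        exact Tsum_add_neg r ⟨j, hj⟩ hr5 hndvd_diff
      rw [show Tsum r (((m:ℤ)+1)-((n:ℤ)+1)) = -1 - Tsum r (((n:ℤ)+1)-((m:ℤ)+1)) by
        linear_combination this]
      ring
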